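/- For a k-letter sequence with n_i elements of letter i (n = ∑ n_i), the number of arrangements of the multiset is ∑_{r_1=1}^{n_1} ... ∑_{r_k=1}^{n_k} F(r_1, ..., r_k) * ∏_{i=1}^k C(n_i - 1, r_i - 1) = n!/(n_1! ... n_k!). -/

import Mathlib

/-- `F r` is the number of words over `{0, …, k-1}` with exactly `r i` occurrences of
letter `i` and no two adjacent letters equal (valid block interleavings). -/
def F {k : ℕ} (r : Fin k → ℕ) : ℕ :=
  Fintype.card {w : List.Vector (Fin k) (∑ i, r i) //
    (∀ i, w.toList.count i = r i) ∧ w.toList.IsChain (· ≠ ·)}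


set_option linter.unusedSectionVars false

open List

variable {α : Type*} [DecidableEq α]

/-- expand a list of (letter, multiplicity) pairs into a word -/
def expandRLE (p : List (α × ℕ)) : List α := p.flatMap fun x => List.replicate x.2 x.1

/-- run-length encoding -/
def rle : List α → List (α × ℕ)
  | [] => []
  | a :: l =>
    match rle l with
    | [] => [(a, 1)]
    | (b, m) :: t => if a = b then (a, m + 1) :: t else (a, 1) :: (b, m) :: t

@[simp] lemma expandRLE_nil : expandRLE ([] : List (α × ℕ)) = [] := rfl
@[simp] lemma expandRLE_cons (x : α × ℕ) (p : List (α × ℕ)) :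
    expandRLE (x :: p) = List.replicate x.2 x.1 ++ expandRLE p := rfl

@[simp] lemma rle_nil : rle ([] : List α) = [] := rfl

lemma rle_cons (a : α) (l : List α) : rle (a :: l) =
    (match rle l with
    | [] => [(a, 1)]
    | (b, m) :: t => if a = b then (a, m + 1) :: t else (a, 1) :: (b, m) :: t) := rfl

lemma rle_cons_nil {l : List α} (a : α) (h : rle l = []) : rle (a :: l) = [(a, 1)] := by
  rw [rle_cons, h]

lemma rle_cons_cons {l : List α} {b : α} {m : ℕ} {t : List (α × ℕ)} (a : α)
    (h : rle l = (b, m) :: t) :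
    rle (a :: l) = if a = b then (a, m + 1) :: t else (a, 1) :: (b, m) :: t := by
  rw [rle_cons, h]

lemma rle_eq_nil_iff {l : List α} : rle l = [] ↔ l = [] := by
  constructor
  · intro h
    cases l with
    | nil => rfl
    | cons a l =>
      exfalso
      rcases hl : rle l with _ | ⟨⟨b, m⟩, t⟩
      · rw [rle_cons_nil a hl] at h; simp at h
      · rw [rle_cons_cons a hl] at h
        split at h <;> simp_all
  · rintro rfl; rfl

lemma expandRLE_rle (l : List α) : expandRLE (rle l) = l := by
  induction l with
  | nil => rfl
  | cons a l ih =>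
    rcases hl : rle l with _ | ⟨⟨b, m⟩, t⟩
    · rw [rle_cons_nil a hl]
      simp [rle_eq_nil_iff.mp hl]
    · rw [rle_cons_cons a hl]
      rw [hl] at ih
      by_cases hab : a = b
      · rw [if_pos hab]
        subst hab
        simp only [expandRLE_cons] at ih ⊢
        rw [List.replicate_succ]
        simpa using ih
      · rw [if_neg hab]
        simp only [expandRLE_cons] at ih ⊢
        simpa using ih

lemma rle_pos {l : List α} : ∀ x ∈ rle l, 0 < x.2 := by
  induction l with
  | nil => simp
  | cons a l ih =>
    rcases hl : rle l with _ | ⟨⟨b, m⟩, t⟩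
    · rw [rle_cons_nil a hl]
      simp
    · rw [rle_cons_cons a hl]
      rw [hl] at ih
      by_cases hab : a = b
      · subst hab
        rw [if_pos rfl]
        intro x hx
        rcases List.mem_cons.mp hx with hx | hx
        · simp [hx]
        · exact ih _ (by simp [hx])
      · rw [if_neg hab]
        intro x hx
        rcases List.mem_cons.mp hx with hx | hx
        · simp [hx]
        · exact ih _ hx

lemma rle_chain' {l : List α} : (rle l).IsChain (fun x y => x.1 ≠ y.1) := by
  induction l with
  | nil => simp
  | cons a l ih =>
    rcases hl : rle l with _ | ⟨⟨b, m⟩, t⟩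
    · rw [rle_cons_nil a hl]
      simp
    · rw [rle_cons_cons a hl]
      rw [hl] at ih
      by_cases hab : a = b
      · rw [if_pos hab]
        subst hab
        rw [List.isChain_cons] at ih ⊢
        exact ih
      · rw [if_neg hab]
        exact List.isChain_cons_cons.mpr ⟨hab, ih⟩

/-- head of rle has same letter as head of list -/
lemma rle_head? (l : List α) : (rle l).head?.map Prod.fst = l.head? := by
  induction l with
  | nil => rfl
  | cons a l ih =>
    rcases hl : rle l with _ | ⟨⟨b, m⟩, t⟩
    · rw [rle_cons_nil a hl]; simp
    · rw [rle_cons_cons a hl]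
      split <;> simp

lemma rle_replicate_append {a : α} {m : ℕ} (hm : 0 < m) (l : List α)
    (hl : ∀ b ∈ l.head?, b ≠ a) : rle (List.replicate m a ++ l) = (a, m) :: rle l := by
  induction m with
  | zero => omega
  | succ m ih =>
    by_cases hm0 : m = 0
    · subst hm0
      simp only [List.replicate_succ, List.replicate_zero, List.nil_append, List.singleton_append]
      rcases hl' : rle l with _ | ⟨⟨b, j⟩, t⟩
      · rw [rle_cons_nil a hl']
      · rw [rle_cons_cons a hl']
        have hb : b ≠ a := by
          apply hl
          have := rle_head? l
          rw [hl'] at this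
          simp at this
          rw [← this]
          rfl
        rw [if_neg (fun h : a = b => hb h.symm)]
    · have ih' := ih (by omega)
      rw [List.replicate_succ, List.cons_append, rle_cons_cons a ih']
      simp

lemma rle_expandRLE {p : List (α × ℕ)} (hpos : ∀ x ∈ p, 0 < x.2)
    (hch : p.IsChain (fun x y => x.1 ≠ y.1)) : rle (expandRLE p) = p := by
  induction p with
  | nil => rfl
  | cons x p ih =>
    obtain ⟨a, m⟩ := x
    have hm : 0 < m := hpos (a, m) (by simp)
    rw [expandRLE_cons]
    rw [rle_replicate_append hm]
    · rw [ih (fun y hy => hpos y (by simp [hy])) hch.tail]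
    · intro b hb
      cases p with
      | nil => simp at hb
      | cons y q =>
        obtain ⟨c, j⟩ := y
        have hj : 0 < j := hpos (c, j) (by simp)
        simp only [expandRLE_cons] at hb
        have hbc : b = c := by
          rcases j with _ | j
          · omega
          · rw [List.replicate_succ, List.cons_append, List.head?_cons] at hb
            simp at hb
            first | exact hb | exact hb.symm
        subst hbc
        exact (List.isChain_cons_cons.mp hch).1.symm

set_option linter.unusedSectionVars false
open List

variable {α : Type*} [DecidableEq α]

/-- the list of multiplicities attached to letter `i` -/
def wt (p : List (α × ℕ)) (i : α) : List ℕ := (p.filter (fun x => x.1 = i)).map Prod.snd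

@[simp] lemma wt_nil (i : α) : wt ([] : List (α × ℕ)) i = [] := rfl

lemma wt_cons (x : α × ℕ) (p : List (α × ℕ)) (i : α) :
    wt (x :: p) i = if x.1 = i then x.2 :: wt p i else wt p i := by
  unfold wt
  by_cases h : x.1 = i <;> simp [List.filter_cons, h]

lemma length_wt (p : List (α × ℕ)) (i : α) :
    (wt p i).length = (p.map Prod.fst).count i := by
  induction p with
  | nil => rfl
  | cons x p ih =>
    rw [wt_cons]
    by_cases h : x.1 = i <;> simp [h, ih, List.count_cons]

lemma mem_wt_of_mem {p : List (α × ℕ)} {y : α × ℕ} (hy : y ∈ p) : y.2 ∈ wt p y.1 := by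
  induction p with
  | nil => simp at hy
  | cons x p ih =>
    rw [wt_cons]
    rcases List.mem_cons.mp hy with rfl | hy
    · simp
    · by_cases h : x.1 = y.1 <;> simp [h, ih hy]

lemma of_mem_wt {p : List (α × ℕ)} {i : α} {m : ℕ} (hm : m ∈ wt p i) :
    ∃ y ∈ p, y.2 = m := by
  unfold wt at hm
  simp only [List.mem_map, List.mem_filter] at hm
  obtain ⟨y, ⟨hy, _⟩, hy2⟩ := hm
  exact ⟨y, hy, hy2⟩

/-- counting letters in the expansion -/
lemma count_expandRLE (p : List (α × ℕ)) (i : α) :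
    (expandRLE p).count i = (wt p i).sum := by
  induction p with
  | nil => rfl
  | cons x p ih =>
    rw [expandRLE_cons, wt_cons, List.count_append, ih, List.count_replicate]
    by_cases h : x.1 = i
    · simp [h]
    · simp [h, Ne.symm h]

lemma sum_wt_sum [Fintype α] (p : List (α × ℕ)) :
    ∑ i : α, (wt p i).sum = (p.map Prod.snd).sum := by
  induction p with
  | nil => simp
  | cons x p ih =>
    simp only [wt_cons, List.map_cons, List.sum_cons, ← ih]
    have key : ∀ i : α, (if x.1 = i then x.2 :: wt p i else wt p i).sum =
        (if x.1 = i then x.2 else 0) + (wt p i).sum := by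
      intro i; by_cases h : x.1 = i <;> simp [h]
    simp only [key]
    rw [Finset.sum_add_distrib]
    simp [Finset.sum_ite_eq]

lemma sum_count_univ [Fintype α] (l : List α) : ∑ i : α, l.count i = l.length := by
  induction l with
  | nil => simp
  | cons a l ih =>
    simp only [List.count_cons, List.length_cons, ← ih]
    rw [Finset.sum_add_distrib]
    simp [Finset.sum_ite_eq]

/-- merge per-letter multiplicity lists back along a skeleton -/
def mergeW : List α → (α → List ℕ) → List ℕ
  | [], _ => []
  | a :: d, f => (f a).headI :: mergeW d (Function.update f a (f a).tail)

@[simp] lemma mergeW_nil (f : α → List ℕ) : mergeW ([] : List α) f = [] := rfl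
@[simp] lemma mergeW_cons (a : α) (d : List α) (f : α → List ℕ) :
    mergeW (a :: d) f = (f a).headI :: mergeW d (Function.update f a (f a).tail) := rfl

lemma mergeW_length (d : List α) (f : α → List ℕ) : (mergeW d f).length = d.length := by
  induction d generalizing f with
  | nil => rfl
  | cons a d ih => simp [ih]

lemma wt_zip_mergeW (d : List α) (f : α → List ℕ)
    (hf : ∀ i, (f i).length = d.count i) (i : α) :
    wt (d.zip (mergeW d f)) i = f i := by
  induction d generalizing f with
  | nil =>
    have := hf i
    simp at this
    simp [this]
  | cons a d ih =>
    have ha : (f a).length = d.count a + 1 := by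
      have := hf a; rwa [List.count_cons_self] at this
    obtain ⟨h0, ftl, hfa⟩ := List.exists_cons_of_ne_nil
      (show f a ≠ [] by intro hnil; rw [hnil] at ha; simp at ha)
    rw [mergeW_cons, List.zip_cons_cons, wt_cons]
    have hupd : ∀ j, ((Function.update f a (f a).tail) j).length = d.count j := by
      intro j
      by_cases hj : j = a
      · subst hj
        rw [Function.update_self, hfa, List.tail_cons]
        rw [hfa] at ha
        simpa using ha
      · rw [Function.update_of_ne hj]
        have := hf j
        rwa [List.count_cons_of_ne (Ne.symm hj)] at this
    rw [ih _ hupd]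
    by_cases hia : a = i
    · subst hia
      simp [hfa]
    · simp only [if_neg hia]
      rw [Function.update_of_ne (fun h => hia h.symm)]

lemma mergeW_wt_zip (d : List α) (ℓ : List ℕ) (h : ℓ.length = d.length) :
    mergeW d (fun i => wt (d.zip ℓ) i) = ℓ := by
  induction d generalizing ℓ with
  | nil =>
    simp at h
    simp [h]
  | cons a d ih =>
    rcases ℓ with _ | ⟨m, ℓ⟩
    · simp at h
    · simp only [List.zip_cons_cons, mergeW_cons]
      have h1 : wt ((a, m) :: d.zip ℓ) a = m :: wt (d.zip ℓ) a := by
        rw [wt_cons]; simp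
      congr 1
      · rw [h1]; rfl
      · have : (Function.update (fun i => wt ((a, m) :: d.zip ℓ) i) a
            ((wt ((a, m) :: d.zip ℓ) a).tail)) = fun i => wt (d.zip ℓ) i := by
          funext i
          by_cases hi : i = a
          · subst hi
            rw [Function.update_self, h1]
            rfl
          · rw [Function.update_of_ne hi, wt_cons,
              if_neg (fun hh : a = i => hi hh.symm)]
        rw [this]
        exact ih ℓ (by simpa using h)

lemma mem_of_mem_wt_zip {d : List α} {ℓ : List ℕ} {i : α} {m : ℕ}
    (hm : m ∈ wt (d.zip ℓ) i) : m ∈ ℓ := by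
  obtain ⟨y, hy, rfl⟩ := of_mem_wt hm
  exact (List.of_mem_zip hy).2

lemma mem_wt_zip_of_mem {d : List α} {ℓ : List ℕ} (h : ℓ.length = d.length) {m : ℕ}
    (hm : m ∈ ℓ) : ∃ i, m ∈ wt (d.zip ℓ) i := by
  induction d generalizing ℓ with
  | nil => simp at h; subst h; simp_all [List.eq_nil_of_length_eq_zero]
  | cons a d ih =>
    rcases ℓ with _ | ⟨x, ℓ⟩
    · simp at hm
    · rcases List.mem_cons.mp hm with rfl | hm'
      · exact ⟨a, by rw [List.zip_cons_cons, wt_cons]; simp⟩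
      · obtain ⟨i, hi⟩ := ih (ℓ := ℓ) (by simpa using h) hm'
        refine ⟨i, ?_⟩
        rw [List.zip_cons_cons, wt_cons]
        by_cases hia : a = i <;> simp [hia, hi]
open Finset in
/-- compositions of `m` into `r` positive parts, as a finset of lists -/
def comps : ℕ → ℕ → Finset (List ℕ)
  | m, 0 => if m = 0 then {[]} else ∅
  | m, r + 1 => (Finset.Icc 1 m).biUnion fun a => (comps (m - a) r).image (a :: ·)

lemma mem_comps {m r : ℕ} {c : List ℕ} :
    c ∈ comps m r ↔ c.length = r ∧ (∀ x ∈ c, 0 < x) ∧ c.sum = m := by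
  induction r generalizing m c with
  | zero =>
    unfold comps
    by_cases hm : m = 0
    · subst hm
      rw [if_pos rfl, Finset.mem_singleton]
      constructor
      · rintro rfl; simp
      · rintro ⟨h, -, -⟩
        exact List.eq_nil_of_length_eq_zero h
    · rw [if_neg hm]
      simp only [Finset.notMem_empty, false_iff]
      rintro ⟨h, -, hs⟩
      rw [List.eq_nil_of_length_eq_zero h] at hs
      simp at hs
      omega
  | succ r ih =>
    unfold comps
    simp only [Finset.mem_biUnion, Finset.mem_image, Finset.mem_Icc]
    constructor
    · rintro ⟨a, ⟨ha1, ham⟩, c', hc', rfl⟩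
      obtain ⟨hl, hp, hs⟩ := ih.mp hc'
      refine ⟨by simp [hl], ?_, by simp [hs]; omega⟩
      intro x hx
      rcases List.mem_cons.mp hx with rfl | hx
      · exact ha1
      · exact hp x hx
    · rintro ⟨hl, hp, hs⟩
      rcases c with _ | ⟨a, c'⟩
      · simp at hl
      · have ha1 : 1 ≤ a := hp a (by simp)
        have hs' : a + c'.sum = m := by simpa using hs
        refine ⟨a, ⟨ha1, by omega⟩, c', ih.mpr ⟨by simpa using hl,
          fun x hx => hp x (by simp [hx]), by omega⟩, rfl⟩

lemma comps_eq_empty {m r : ℕ} (h : m < r) : comps m r = ∅ := by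
  ext c
  simp only [mem_comps, Finset.notMem_empty, iff_false]
  rintro ⟨hl, hp, hs⟩
  have := List.length_le_sum_of_one_le c hp
  omega

lemma comps_card : ∀ r m : ℕ, 1 ≤ r → r ≤ m → (comps m r).card = (m - 1).choose (r - 1) := by
  intro r
  induction r with
  | zero => omega
  | succ r ih =>
    intro m _ hrm
    unfold comps
    rw [Finset.card_biUnion]
    · have himg : ∀ a ∈ Finset.Icc 1 m, ((comps (m - a) r).image (a :: ·)).card
          = (comps (m - a) r).card := fun a _ =>
        Finset.card_image_of_injective _ (fun x y h => by simpa using h)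
      rw [Finset.sum_congr rfl himg]
      rcases Nat.eq_zero_or_pos r with rfl | hr
      · -- r = 0 : single term a = m
        have : ∀ a ∈ Finset.Icc 1 m, (comps (m - a) 0).card = if a = m then 1 else 0 := by
          intro a ha
          simp only [Finset.mem_Icc] at ha
          unfold comps
          by_cases h : a = m
          · subst h; simp
          · rw [if_neg (by omega)]; simp [h]
        rw [Finset.sum_congr rfl this, Finset.sum_ite_eq' (Finset.Icc 1 m) m (fun _ => 1)]
        simp [hrm]
      · -- r ≥ 1
        have hsplit : ∀ a ∈ Finset.Icc 1 m, (comps (m - a) r).card =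
            if a ≤ m - r then (m - a - 1).choose (r - 1) else 0 := by
          intro a ha
          simp only [Finset.mem_Icc] at ha
          by_cases h : a ≤ m - r
          · rw [if_pos h, ih (m - a) hr (by omega)]
          · rw [if_neg h, comps_eq_empty (by omega), Finset.card_empty]
        rw [Finset.sum_congr rfl hsplit, ← Finset.sum_filter]
        have hfil : (Finset.Icc 1 m).filter (fun a => a ≤ m - r) = Finset.Icc 1 (m - r) := by
          ext a
          simp only [Finset.mem_Icc, Finset.mem_filter]
          omega
        rw [hfil]
        have hbij : ∑ a ∈ Finset.Icc 1 (m - r), (m - a - 1).choose (r - 1)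
            = ∑ j ∈ Finset.Icc (r - 1) (m - 2), j.choose (r - 1) := by
          apply Finset.sum_nbij' (fun a => m - a - 1) (fun j => m - j - 1)
          all_goals intros
          all_goals first
            | rfl
            | (simp_all only [Finset.mem_Icc]; omega)
        rw [hbij, Nat.sum_Icc_choose]
        congr 1 <;> omega
    · -- pairwise disjoint
      intro a _ b _ hab
      rw [Function.onFun, Finset.disjoint_left]
      rintro c hc hc'
      simp only [Finset.mem_image] at hc hc'
      obtain ⟨c1, -, rfl⟩ := hc
      obtain ⟨c2, -, h2⟩ := hc'
      have h3 : b = a ∧ c2 = c1 := by simpa using h2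
      exact hab h3.1.symm
open scoped Nat

/-- Pascal-type recurrence for the multinomial coefficient -/
lemma multinomial_rec {k : ℕ} (n : Fin k → ℕ) (hpos : 0 < ∑ i, n i) :
    ∑ i ∈ Finset.univ.filter (fun i => 0 < n i),
      Nat.multinomial Finset.univ (Function.update n i (n i - 1)) =
    Nat.multinomial Finset.univ n := by
  have hprodpos : 0 < ∏ j, (n j) ! := Finset.prod_pos fun j _ => Nat.factorial_pos _
  apply Nat.eq_of_mul_eq_mul_left hprodpos
  rw [Nat.multinomial_spec, Finset.mul_sum]
  have key : ∀ i ∈ Finset.univ.filter (fun i => 0 < n i),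
      (∏ j, (n j) !) * Nat.multinomial Finset.univ (Function.update n i (n i - 1)) =
      n i * (∑ j, n j - 1) ! := by
    intro i hi
    simp only [Finset.mem_filter] at hi
    have hni : 0 < n i := hi.2
    have h1 : (∏ j, (n j) !) = n i * ∏ j, ((Function.update n i (n i - 1)) j) ! := by
      have e1 : ∀ j, ((Function.update n i (n i - 1)) j) ! =
          Function.update (fun a => (n a) !) i ((n i - 1) !) j := fun j =>
        Function.apply_update (fun _ v => v !) n i (n i - 1) j
      simp only [e1]
      rw [Finset.prod_update_of_mem (Finset.mem_univ i),
        Finset.prod_eq_mul_prod_sdiff_singleton_of_mem (Finset.mem_univ i) (fun a => (n a) !),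
        ← mul_assoc, Nat.mul_factorial_pred hni.ne']
    have h2 : ∑ j, (Function.update n i (n i - 1)) j = ∑ j, n j - 1 := by
      rw [Finset.sum_update_of_mem (Finset.mem_univ i)]
      rw [Finset.sum_eq_add_sum_sdiff_singleton_of_mem (Finset.mem_univ i) n]
      omega
    rw [h1, mul_assoc, Nat.multinomial_spec, h2]
  rw [Finset.sum_congr rfl key, ← Finset.sum_mul]
  have h3 : ∑ i ∈ Finset.univ.filter (fun i => 0 < n i), n i = ∑ i, n i := by
    rw [Finset.sum_filter]
    apply Finset.sum_congr rfl
    intro i _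
    by_cases h : 0 < n i
    · simp [h]
    · simp [h]; omega
  rw [h3, Nat.mul_factorial_pred hpos.ne']

/-- The number of words with prescribed letter counts is the multinomial coefficient. -/
lemma card_words {k : ℕ} : ∀ (N : ℕ) (n : Fin k → ℕ), (∑ i, n i) = N →
    Fintype.card {w : List.Vector (Fin k) N // ∀ i, w.toList.count i = n i} =
      Nat.multinomial Finset.univ n := by
  intro N
  induction N with
  | zero =>
    intro n h
    have hz : ∀ i, n i = 0 := by
      intro i
      have : n i ≤ ∑ j, n j := Finset.single_le_sum (fun j _ => Nat.zero_le _) (Finset.mem_univ i)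
      omega
    have hM : Nat.multinomial Finset.univ n = 1 := by
      have := Nat.multinomial_spec Finset.univ n
      simp only [hz] at this
      simpa using this
    rw [hM, Fintype.card_eq_one_iff]
    refine ⟨⟨List.Vector.nil, fun i => by simp [hz, List.Vector.nil]⟩, ?_⟩
    rintro ⟨w, hw⟩
    apply Subtype.ext
    apply List.Vector.toList_injective
    have h0 : w.toList.length = 0 := w.toList_length
    simp [List.eq_nil_of_length_eq_zero h0, List.Vector.nil]
  | succ N ih =>
    intro n h
    have e : {w : List.Vector (Fin k) (N + 1) // ∀ i, w.toList.count i = n i} ≃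
        Σ i : Fin k, {w : List.Vector (Fin k) N //
          ∀ j, w.toList.count j = Function.update n i (n i - 1) j} := by
      refine ⟨fun w => ⟨w.1.head, w.1.tail, ?_⟩, fun x => ⟨x.2.1.cons x.1, ?_⟩, ?_, ?_⟩
      · intro j
        have hl : w.1.toList = w.1.head :: w.1.tail.toList := by
          rw [← List.Vector.toList_cons, List.Vector.cons_head_tail]
        have hcount := w.2 j
        rw [hl, List.count_cons] at hcount
        by_cases hj : j = w.1.head
        · rw [hj, Function.update_self]
          rw [hj] at hcount
          simp at hcount
          omega
        · rw [Function.update_of_ne hj]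
          simp [Ne.symm hj] at hcount
          omega
      · intro j
        obtain ⟨i, w, hw⟩ := x
        have hni : 0 < n i := by
          by_contra hni
          push_neg at hni
          have hs : ∑ j, Function.update n i (n i - 1) j = ∑ j, n j := by
            apply Finset.sum_congr rfl
            intro j _
            by_cases hj : j = i
            · subst hj; rw [Function.update_self]; omega
            · rw [Function.update_of_ne hj]
          have hlen : ∑ j, w.toList.count j = N := by
            rw [sum_count_univ w.toList, w.toList_length]
          have hupd : ∑ j, Function.update n i (n i - 1) j = N := by
            rw [← hlen]
            exact Finset.sum_congr rfl fun j _ => (hw j).symm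
          omega
        have hl : (w.cons i).toList = i :: w.toList := by simp
        rw [hl, List.count_cons, hw j]
        by_cases hj : j = i
        · rw [hj, Function.update_self]
          simp
          omega
        · rw [Function.update_of_ne hj]
          simp [show i ≠ j from fun hh => hj hh.symm]
      · rintro ⟨w, hw⟩
        apply Subtype.ext
        exact w.cons_head_tail
      · rintro ⟨i, w, hw⟩
        apply Sigma.subtype_ext
        · simp
        · simp
    rw [Fintype.card_congr e, Fintype.card_sigma]
    have hcard : ∀ i : Fin k,
        Fintype.card {w : List.Vector (Fin k) N //
          ∀ j, w.toList.count j = Function.update n i (n i - 1) j} =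
        if 0 < n i then Nat.multinomial Finset.univ (Function.update n i (n i - 1)) else 0 := by
      intro i
      by_cases hni : 0 < n i
      · rw [if_pos hni]
        apply ih
        rw [Finset.sum_update_of_mem (Finset.mem_univ i)]
        rw [Finset.sum_eq_add_sum_sdiff_singleton_of_mem (Finset.mem_univ i) n] at h
        omega
      · rw [if_neg hni]
        rw [Fintype.card_eq_zero_iff]
        refine ⟨fun x => ?_⟩
        obtain ⟨w, hw⟩ := x
        push_neg at hni
        have hs : ∑ j, Function.update n i (n i - 1) j = ∑ j, n j := by
          apply Finset.sum_congr rfl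
          intro j _
          by_cases hj : j = i
          · subst hj; rw [Function.update_self]; omega
          · rw [Function.update_of_ne hj]
        have hlen : ∑ j, w.toList.count j = N := by
          rw [sum_count_univ w.toList, w.toList_length]
        have hupd : ∑ j, Function.update n i (n i - 1) j = N := by
          rw [← hlen]
          exact Finset.sum_congr rfl fun j _ => (hw j).symm
        omega
    rw [Finset.sum_congr rfl (fun i _ => hcard i), Finset.sum_ite, Finset.sum_const_zero,
      add_zero]
    exact multinomial_rec n (by omega)
lemma expandRLE_length {α : Type*} (p : List (α × ℕ)) :
    (expandRLE p).length = (p.map Prod.snd).sum := by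
  induction p with
  | nil => rfl
  | cons x p ih => simp [ih]

lemma zip_map_fst_snd' {α β : Type*} (l : List (α × β)) :
    (l.map Prod.fst).zip (l.map Prod.snd) = l := by
  have := List.zip_unzip l
  rwa [List.unzip_eq_map] at this

section Glue
variable {α : Type*} [DecidableEq α]

lemma glue (d : List α) (hchain : d.IsChain (· ≠ ·)) (f : α → List ℕ)
    (hlen : ∀ i, (f i).length = d.count i) (hpos : ∀ i x, x ∈ f i → 0 < x) :
    rle (expandRLE (d.zip (mergeW d f))) = d.zip (mergeW d f) ∧
    (d.zip (mergeW d f)).map Prod.fst = d ∧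
    (∀ i, wt (d.zip (mergeW d f)) i = f i) := by
  have hmlen : (mergeW d f).length = d.length := mergeW_length d f
  have hmap : (d.zip (mergeW d f)).map Prod.fst = d :=
    List.map_fst_zip (le_of_eq hmlen.symm)
  have hwt : ∀ i, wt (d.zip (mergeW d f)) i = f i := wt_zip_mergeW d f hlen
  have hp : ∀ x ∈ d.zip (mergeW d f), 0 < x.2 := by
    intro x hx
    have hm := mem_wt_of_mem hx
    rw [hwt] at hm
    exact hpos _ _ hm
  have hch : (d.zip (mergeW d f)).IsChain (fun a b => a.1 ≠ b.1) := by
    have h2 := hchain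
    rw [← hmap, List.isChain_map] at h2
    exact h2
  exact ⟨rle_expandRLE hp hch, hmap, hwt⟩

end Glue

/-- the words with letter counts `n` and run counts `r` -/
lemma card_fiber {k : ℕ} (n r : Fin k → ℕ) (hr : ∀ i, 1 ≤ r i ∧ r i ≤ n i) :
    Fintype.card {w : List.Vector (Fin k) (∑ i, n i) //
      (∀ i, w.toList.count i = n i) ∧
      (∀ i, ((rle w.toList).map Prod.fst).count i = r i)} =
    F r * ∏ i, (n i - 1).choose (r i - 1) := by
  classical
  have key : {w : List.Vector (Fin k) (∑ i, n i) //
      (∀ i, w.toList.count i = n i) ∧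
      (∀ i, ((rle w.toList).map Prod.fst).count i = r i)} ≃
      ({w : List.Vector (Fin k) (∑ i, r i) //
        (∀ i, w.toList.count i = r i) ∧ w.toList.IsChain (· ≠ ·)} ×
       (∀ i, {c : List ℕ // c ∈ comps (n i) (r i)})) := by
    refine ⟨fun w => (⟨⟨(rle w.1.toList).map Prod.fst, ?_⟩, ?_, ?_⟩,
        fun i => ⟨wt (rle w.1.toList) i, ?_⟩), fun x =>
        ⟨⟨expandRLE (x.1.1.toList.zip (mergeW x.1.1.toList (fun i => (x.2 i).1))), ?_⟩,
          ?_, ?_⟩, ?_, ?_⟩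
    · -- length of skeleton
      rw [← sum_count_univ ((rle w.1.toList).map Prod.fst)]
      exact Finset.sum_congr rfl fun i _ => w.2.2 i
    · exact w.2.2
    · show ((rle w.1.toList).map Prod.fst).IsChain (· ≠ ·)
      rw [List.isChain_map]
      exact rle_chain'
    · rw [mem_comps]
      refine ⟨?_, ?_, ?_⟩
      · rw [length_wt]
        exact w.2.2 i
      · intro x hx
        obtain ⟨y, hy, rfl⟩ := of_mem_wt hx
        exact rle_pos y hy
      · rw [← count_expandRLE, expandRLE_rle]
        exact w.2.1 i
    · -- length of expanded word
      obtain ⟨⟨d, hd⟩, f⟩ := x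
      obtain ⟨-, -, hwt⟩ := glue d.toList hd.2 (fun i => (f i).1)
        (fun i => by
          have := mem_comps.mp (f i).2
          rw [this.1, hd.1 i])
        (fun i x hx => (mem_comps.mp (f i).2).2.1 x hx)
      rw [expandRLE_length, ← sum_wt_sum]
      refine Finset.sum_congr rfl fun i _ => ?_
      rw [hwt i, (mem_comps.mp (f i).2).2.2]
    · -- letter counts
      intro i
      obtain ⟨⟨d, hd⟩, f⟩ := x
      obtain ⟨-, -, hwt⟩ := glue d.toList hd.2 (fun i => (f i).1)
        (fun i => by
          have := mem_comps.mp (f i).2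
          rw [this.1, hd.1 i])
        (fun i x hx => (mem_comps.mp (f i).2).2.1 x hx)
      show (expandRLE _).count i = n i
      rw [count_expandRLE, hwt i, (mem_comps.mp (f i).2).2.2]
    · -- run counts
      intro i
      obtain ⟨⟨d, hd⟩, f⟩ := x
      obtain ⟨hrle, hmap, -⟩ := glue d.toList hd.2 (fun i => (f i).1)
        (fun i => by
          have := mem_comps.mp (f i).2
          rw [this.1, hd.1 i])
        (fun i x hx => (mem_comps.mp (f i).2).2.1 x hx)
      show ((rle (expandRLE _)).map Prod.fst).count i = r i
      rw [hrle, hmap]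
      exact hd.1 i
    · -- left inverse
      rintro ⟨w, hw⟩
      apply Subtype.ext
      apply List.Vector.toList_injective
      show expandRLE ((List.map Prod.fst (rle w.toList)).zip
        (mergeW (List.map Prod.fst (rle w.toList)) (fun i => wt (rle w.toList) i))) = w.toList
      set p := rle w.toList with hp
      have hlen2 : (p.map Prod.snd).length = (p.map Prod.fst).length := by simp
      have hmw : mergeW (p.map Prod.fst) (fun i => wt p i) = p.map Prod.snd := by
        have := mergeW_wt_zip (p.map Prod.fst) (p.map Prod.snd) hlen2
        rw [zip_map_fst_snd'] at this
        exact this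
      rw [hmw, zip_map_fst_snd']
      exact expandRLE_rle w.toList
    · -- right inverse
      rintro ⟨⟨d, hd⟩, f⟩
      obtain ⟨hrle, hmap, hwt⟩ := glue d.toList hd.2 (fun i => (f i).1)
        (fun i => by
          have := mem_comps.mp (f i).2
          rw [this.1, hd.1 i])
        (fun i x hx => (mem_comps.mp (f i).2).2.1 x hx)
      refine Prod.ext ?_ ?_
      · apply Subtype.ext
        apply List.Vector.toList_injective
        show (rle (expandRLE _)).map Prod.fst = d.toList
        rw [hrle, hmap]
      · funext i
        apply Subtype.ext
        show wt (rle (expandRLE _)) i = (f i).1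
        rw [hrle, hwt i]
  rw [Fintype.card_congr key, Fintype.card_prod, Fintype.card_pi]
  congr 1
  refine Finset.prod_congr rfl fun i _ => ?_
  rw [Fintype.card_coe, comps_card (r i) (n i) (hr i).1 (hr i).2]
theorem stmt_11 (k : ℕ) (hk : 0 < k) (n : Fin k → ℕ) (hn : ∀ i, 0 < n i) :
    ∑ r ∈ Fintype.piFinset fun i => Finset.Icc 1 (n i),
        F r * ∏ i, (n i - 1).choose (r i - 1) =
      Nat.multinomial Finset.univ n := by
  classical
  rw [← card_words (∑ i, n i) n rfl]
  have hcard : Fintype.card {w : List.Vector (Fin k) (∑ i, n i) //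
        ∀ i, w.toList.count i = n i} =
      ∑ r ∈ Fintype.piFinset fun i => Finset.Icc 1 (n i),
        (Finset.univ.filter (fun w : {w : List.Vector (Fin k) (∑ i, n i) //
          ∀ i, w.toList.count i = n i} =>
          (fun i => ((rle w.1.toList).map Prod.fst).count i) = r)).card := by
    rw [← Finset.card_univ, Finset.card_eq_sum_card_fiberwise
      (f := fun w : {w : List.Vector (Fin k) (∑ i, n i) // ∀ i, w.toList.count i = n i} =>
        fun i => ((rle w.1.toList).map Prod.fst).count i)]
    intro w _
    rw [Finset.mem_coe, Fintype.mem_piFinset]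
    intro i
    rw [Finset.mem_Icc]
    have hsum : (wt (rle w.1.toList) i).sum = n i := by
      rw [← count_expandRLE, expandRLE_rle]
      exact w.2 i
    beta_reduce
    rw [← length_wt]
    constructor
    · by_contra hcon
      push_neg at hcon
      have h0 : (wt (rle w.1.toList) i).length = 0 := by omega
      rw [List.eq_nil_of_length_eq_zero h0] at hsum
      have := hn i
      simp at hsum
      omega
    · calc (wt (rle w.1.toList) i).length ≤ (wt (rle w.1.toList) i).sum := by
            apply List.length_le_sum_of_one_le
            intro x hx
            obtain ⟨y, hy, rfl⟩ := of_mem_wt hx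
            exact rle_pos y hy
        _ = n i := hsum
  rw [hcard]
  refine Finset.sum_congr rfl fun r hr => ?_
  rw [Fintype.mem_piFinset] at hr
  have hr' : ∀ i, 1 ≤ r i ∧ r i ≤ n i := fun i => Finset.mem_Icc.mp (hr i)
  have e : {w : {w : List.Vector (Fin k) (∑ i, n i) // ∀ i, w.toList.count i = n i} //
      (fun i => ((rle w.1.toList).map Prod.fst).count i) = r} ≃
      {w : List.Vector (Fin k) (∑ i, n i) //
        (∀ i, w.toList.count i = n i) ∧
        (∀ i, ((rle w.toList).map Prod.fst).count i = r i)} := by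
    refine (Equiv.subtypeSubtypeEquivSubtypeInter
      (p := fun w : List.Vector (Fin k) (∑ i, n i) => ∀ i, w.toList.count i = n i)
      (q := fun w : List.Vector (Fin k) (∑ i, n i) =>
        (fun i => ((rle w.toList).map Prod.fst).count i) = r)).trans
      (Equiv.subtypeEquivRight ?_)
    intro w
    constructor
    · rintro ⟨h1, h2⟩
      exact ⟨h1, fun i => congrFun h2 i⟩
    · rintro ⟨h1, h2⟩
      exact ⟨h1, funext h2⟩
  rw [← Fintype.card_subtype, Fintype.card_congr e, card_fiber n r hr']
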